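/- Let (t_a, t_{a+1}, ...) be a sequence of strictly positive reals with t_N ~ C·N^{−p} as N → ∞, for some constants C > 0 and p > 0. Define ν(N) = inf{ N' ≥ N : t_{N'} = min{t_a, ..., t_{N'}} } (the first 'new low' at or after N). Then ν(N) is finite for all N, and t_{ν(N)} ~ C·N^{−p} as N → ∞. -/

import Mathlib

open Filter

/-- If `t_N ~ C N^{-p}` with `C, p > 0` and all `t_N > 0` (for `N ≥ a`), then for every `N`
the set of "new lows" at or after `N` is nonempty (so `ν(N)` is finite), and
`t_{ν(N)} ~ C N^{-p}`, where `ν(N)` is the first index `N' ≥ N` with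
`t_{N'} = min{t_a, …, t_{N'}}`. -/
theorem new_low_asymptotics (a : ℕ) (t : ℕ → ℝ) (C p : ℝ) (hC : 0 < C) (hp : 0 < p)
    (hpos : ∀ N, a ≤ N → 0 < t N)
    (hasymp : Tendsto (fun N : ℕ => t N / (C * (N : ℝ) ^ (-p))) atTop (nhds 1)) :
    (∀ N, a ≤ N → {N' : ℕ | N ≤ N' ∧ ∀ k, a ≤ k → k ≤ N' → t N' ≤ t k}.Nonempty) ∧
    Tendsto
      (fun N : ℕ =>
        t (sInf {N' : ℕ | N ≤ N' ∧ ∀ k, a ≤ k → k ≤ N' → t N' ≤ t k}) / (C * (N : ℝ) ^ (-p)))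
      atTop (nhds 1) := by
  have hgpos : ∀ N : ℕ, 1 ≤ N → 0 < C * (N : ℝ) ^ (-p) := by
    intro N hN
    have h0 : (0:ℝ) < (N : ℝ) := by exact_mod_cast hN
    positivity
  have hganti : ∀ m n : ℕ, 1 ≤ m → m ≤ n →
      C * (n : ℝ) ^ (-p) ≤ C * (m : ℝ) ^ (-p) := by
    intro m n hm hmn
    have h1 : (0:ℝ) < (m : ℝ) := by exact_mod_cast hm
    have h2 : (m:ℝ) ≤ (n:ℝ) := by exact_mod_cast hmn
    have := Real.rpow_le_rpow_of_nonpos h1 h2 (neg_nonpos.mpr hp.le)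
    nlinarith
  -- `C N^{-p} → 0`
  have hg0 : Tendsto (fun N : ℕ => C * (N : ℝ) ^ (-p)) atTop (nhds 0) := by
    have h := ((tendsto_rpow_neg_atTop hp).comp tendsto_natCast_atTop_atTop).const_mul C
    simpa using h
  -- `t → 0`
  have ht0 : Tendsto t atTop (nhds 0) := by
    have h1 : Tendsto (fun N : ℕ => t N / (C * (N : ℝ) ^ (-p)) * (C * (N : ℝ) ^ (-p)))
        atTop (nhds (1 * 0)) := hasymp.mul hg0
    rw [one_mul] at h1
    refine h1.congr' ?_
    filter_upwards [eventually_ge_atTop 1] with N hN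
    field_simp
  -- nonemptiness of the new-low sets
  have hne : ∀ N, a ≤ N → {N' : ℕ | N ≤ N' ∧ ∀ k, a ≤ k → k ≤ N' → t N' ≤ t k}.Nonempty := by
    intro N hN
    obtain ⟨m, hm, hmmin⟩ := (Finset.Icc a N).exists_min_image t
      ⟨N, Finset.mem_Icc.2 ⟨hN, le_rfl⟩⟩
    have hmpos : 0 < t m := hpos m (Finset.mem_Icc.1 hm).1
    obtain ⟨K, hK⟩ := ((ht0.eventually_lt_const hmpos).and (eventually_ge_atTop N)).exists
    obtain ⟨j, hj, hjmin⟩ := (Finset.Icc a K).exists_min_image t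
      ⟨K, Finset.mem_Icc.2 ⟨hN.trans hK.2, le_rfl⟩⟩
    have hja : a ≤ j := (Finset.mem_Icc.1 hj).1
    refine ⟨j, ?_, ?_⟩
    · by_contra h
      push_neg at h
      have h1 : t m ≤ t j := hmmin j (Finset.mem_Icc.2 ⟨hja, h.le⟩)
      have h2 : t j ≤ t K := hjmin K (Finset.mem_Icc.2 ⟨hN.trans hK.2, le_rfl⟩)
      linarith [hK.1]
    · intro k hak hkj
      exact hjmin k (Finset.mem_Icc.2 ⟨hak, hkj.trans (Finset.mem_Icc.1 hj).2⟩)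
  refine ⟨hne, ?_⟩
  set ν : ℕ → ℕ := fun N => sInf {N' : ℕ | N ≤ N' ∧ ∀ k, a ≤ k → k ≤ N' → t N' ≤ t k}
    with hνdef
  have hνmem : ∀ N, a ≤ N → N ≤ ν N ∧ ∀ k, a ≤ k → k ≤ ν N → t (ν N) ≤ t k := by
    intro N hN
    exact Nat.sInf_mem (hne N hN)
  -- Step A: eventual upper bound on ν N
  have hA : ∀ δ : ℝ, 0 < δ → ∀ᶠ N : ℕ in atTop, (ν N : ℝ) ≤ (1 + δ) * N := by
    intro δ hδ
    set q : ℝ := (1 + δ) ^ p with hqdef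
    have hq1 : 1 < q := by
      rw [hqdef]
      rw [Real.one_lt_rpow_iff (by linarith)]
      exact Or.inl ⟨by linarith, hp⟩
    set θ : ℝ := (q - 1) / (2 * (q + 1)) with hθdef
    have hθpos : 0 < θ := by
      apply div_pos <;> linarith
    have hθ1 : θ < 1 := by
      rw [hθdef, div_lt_one (by linarith)]
      linarith
    have hθlt : (1 + θ) / (1 - θ) < q := by
      rw [div_lt_iff₀ (by linarith)]
      have : θ * (q + 1) = (q - 1) / 2 := by
        rw [hθdef, div_mul_eq_mul_div, div_eq_div_iff (ne_of_gt (by linarith)) two_ne_zero]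
        ring
      nlinarith
    -- ratio bounds eventually
    have hrlow : ∀ᶠ k : ℕ in atTop, 1 - θ < t k / (C * (k : ℝ) ^ (-p)) :=
      hasymp.eventually (eventually_gt_nhds (by linarith))
    have hrhigh : ∀ᶠ k : ℕ in atTop, t k / (C * (k : ℝ) ^ (-p)) < 1 + θ :=
      hasymp.eventually (eventually_lt_nhds (by linarith))
    obtain ⟨N₀, hN₀⟩ := eventually_atTop.1 (hrlow.and hrhigh)
    set N₁ : ℕ := max N₀ (max a 1) with hN₁def
    have hN₁a : a ≤ N₁ := le_trans (le_max_left a 1) (le_max_right _ _)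
    have hN₁1 : 1 ≤ N₁ := le_trans (le_max_right a 1) (le_max_right _ _)
    have hN₁r : ∀ k : ℕ, N₁ ≤ k →
        1 - θ < t k / (C * (k : ℝ) ^ (-p)) ∧ t k / (C * (k : ℝ) ^ (-p)) < 1 + θ :=
      fun k hk => hN₀ k (le_trans (le_max_left _ _) hk)
    obtain ⟨m0, hm0, hm0min⟩ := (Finset.Icc a N₁).exists_min_image t
      ⟨N₁, Finset.mem_Icc.2 ⟨hN₁a, le_rfl⟩⟩
    have hm0pos : 0 < t m0 := hpos m0 (Finset.mem_Icc.1 hm0).1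
    obtain ⟨K1, hK1⟩ := eventually_atTop.1 (ht0.eventually_lt_const hm0pos)
    -- floor function M
    have hMge : ∀ N : ℕ, N ≤ ⌊(1 + δ) * N⌋₊ := by
      intro N
      apply Nat.le_floor
      nlinarith [Nat.cast_nonneg (α := ℝ) N]
    have hMle : ∀ N : ℕ, (⌊(1 + δ) * N⌋₊ : ℝ) ≤ (1 + δ) * N := by
      intro N
      apply Nat.floor_le
      positivity
    -- the ratio `(M N / N)^p` tends to `q`
    have hs : Tendsto (fun N : ℕ => (⌊(1 + δ) * N⌋₊ : ℝ) / N) atTop (nhds (1 + δ)) := by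
      apply tendsto_of_tendsto_of_tendsto_of_le_of_le'
        (g := fun N : ℕ => (1 + δ) - 1 / (N : ℝ)) (h := fun _ : ℕ => (1 + δ))
      · simpa using (tendsto_const_nhds : Tendsto (fun _ : ℕ => (1 + δ : ℝ)) atTop (nhds (1 + δ))).sub tendsto_one_div_atTop_nhds_zero_nat
      · exact tendsto_const_nhds
      · filter_upwards [eventually_ge_atTop 1] with N hN
        have hNpos : (0:ℝ) < N := by exact_mod_cast hN
        rw [sub_le_iff_le_add, ← add_div, le_div_iff₀ hNpos]
        have := Nat.sub_one_lt_floor ((1 + δ) * N)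
        push_cast
        nlinarith [hMge N]
      · filter_upwards [eventually_ge_atTop 1] with N hN
        have hNpos : (0:ℝ) < N := by exact_mod_cast hN
        rw [div_le_iff₀ hNpos]
        nlinarith [hMle N]
    have hqlim : Tendsto (fun N : ℕ => ((⌊(1 + δ) * N⌋₊ : ℝ) / N) ^ p) atTop (nhds q) :=
      hs.rpow_const (Or.inl (by linarith))
    have hqev : ∀ᶠ N : ℕ in atTop, (1 + θ) / (1 - θ) < ((⌊(1 + δ) * N⌋₊ : ℝ) / N) ^ p :=
      hqlim.eventually (eventually_gt_nhds hθlt)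
    filter_upwards [eventually_ge_atTop N₁, eventually_ge_atTop K1, hqev] with N hNN₁ hNK1 hqN
    set M : ℕ := ⌊(1 + δ) * N⌋₊ with hMdef
    have hNM : N ≤ M := hMge N
    have hN1 : 1 ≤ N := le_trans hN₁1 hNN₁
    have haN : a ≤ N := le_trans hN₁a hNN₁
    have hMK1 : K1 ≤ M := le_trans hNK1 hNM
    -- key inequality : (1+θ) g M < (1-θ) g N
    have hkey : (1 + θ) * (C * (M : ℝ) ^ (-p)) < (1 - θ) * (C * (N : ℝ) ^ (-p)) := by
      have hNpos : (0:ℝ) < N := by exact_mod_cast hN1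
      have hMpos : (0:ℝ) < M := by exact_mod_cast le_trans hN1 hNM
      have hNp : (0:ℝ) < (N : ℝ) ^ p := Real.rpow_pos_of_pos hNpos p
      have hMp : (0:ℝ) < (M : ℝ) ^ p := Real.rpow_pos_of_pos hMpos p
      rw [Real.div_rpow hMpos.le hNpos.le, div_lt_div_iff₀ (by linarith) hNp] at hqN
      have hgoal : (1 + θ) * C / (M : ℝ) ^ p < (1 - θ) * C / (N : ℝ) ^ p := by
        rw [div_lt_div_iff₀ hMp hNp]
        nlinarith
      calc (1 + θ) * (C * (M : ℝ) ^ (-p)) = (1 + θ) * C / (M : ℝ) ^ p := by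
            rw [Real.rpow_neg hMpos.le]; ring
        _ < (1 - θ) * C / (N : ℝ) ^ p := hgoal
        _ = (1 - θ) * (C * (N : ℝ) ^ (-p)) := by rw [Real.rpow_neg hNpos.le]; ring
    -- the min over [a, M] is attained at an index ≥ N
    obtain ⟨j, hj, hjmin⟩ := (Finset.Icc a M).exists_min_image t
      ⟨M, Finset.mem_Icc.2 ⟨le_trans haN hNM, le_rfl⟩⟩
    have hja : a ≤ j := (Finset.mem_Icc.1 hj).1
    have hjM : j ≤ M := (Finset.mem_Icc.1 hj).2
    have htMsmall : t M < t m0 := hK1 M hMK1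
    have htjM : t j ≤ t M := hjmin M (Finset.mem_Icc.2 ⟨le_trans haN hNM, le_rfl⟩)
    have hMhigh : t M < (1 + θ) * (C * (M : ℝ) ^ (-p)) := by
      have h := (hN₁r M (le_trans hNN₁ hNM)).2
      have hgM : 0 < C * (M : ℝ) ^ (-p) := hgpos M (le_trans hN1 hNM)
      rw [div_lt_iff₀ hgM] at h
      linarith
    have hNj : N ≤ j := by
      by_contra h
      push_neg at h
      rcases le_or_gt j N₁ with hcase | hcase
      · -- small j: t j ≥ t m0 > t M ≥ t j
        have h1 : t m0 ≤ t j := hm0min j (Finset.mem_Icc.2 ⟨hja, hcase⟩)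
        linarith
      · -- N₁ < j < N
        have hj1 : 1 ≤ j := le_trans hN₁1 hcase.le
        have h1 : 1 - θ < t j / (C * (j : ℝ) ^ (-p)) := (hN₁r j hcase.le).1
        have hgj : 0 < C * (j : ℝ) ^ (-p) := hgpos j hj1
        rw [lt_div_iff₀ hgj] at h1
        have h2 : C * (N : ℝ) ^ (-p) ≤ C * (j : ℝ) ^ (-p) := hganti j N hj1 h.le
        have h3 : (1 - θ) * (C * (N : ℝ) ^ (-p)) ≤ (1 - θ) * (C * (j : ℝ) ^ (-p)) := by
          nlinarith
        linarith
    have hjset : j ∈ {N' : ℕ | N ≤ N' ∧ ∀ k, a ≤ k → k ≤ N' → t N' ≤ t k} := by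
      refine ⟨hNj, fun k hak hkj => ?_⟩
      exact hjmin k (Finset.mem_Icc.2 ⟨hak, hkj.trans hjM⟩)
    have hνj : ν N ≤ j := Nat.sInf_le hjset
    calc (ν N : ℝ) ≤ (j : ℝ) := by exact_mod_cast hνj
      _ ≤ (M : ℝ) := by exact_mod_cast hjM
      _ ≤ (1 + δ) * N := hMle N
  -- Step B: `ν N / N → 1`
  have hν1 : ∀ᶠ N : ℕ in atTop, 1 ≤ (ν N : ℝ) / N := by
    filter_upwards [eventually_ge_atTop (max a 1)] with N hN
    have haN : a ≤ N := le_trans (le_max_left a 1) hN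
    have hNpos : (0:ℝ) < N := by
      exact_mod_cast le_trans (le_max_right a 1) hN
    rw [le_div_iff₀ hNpos, one_mul]
    exact_mod_cast (hνmem N haN).1
  have hstend : Tendsto (fun N : ℕ => (ν N : ℝ) / N) atTop (nhds 1) := by
    rw [tendsto_order]
    constructor
    · intro b hb
      filter_upwards [hν1] with N h
      linarith
    · intro b hb
      filter_upwards [hA ((b - 1) / 2) (by linarith), eventually_ge_atTop 1] with N h1 h2
      have hNpos : (0:ℝ) < N := by exact_mod_cast h2
      rw [div_lt_iff₀ hNpos]
      nlinarith
  -- Step C: `ν N → ∞`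
  have hνtop : Tendsto ν atTop atTop := by
    apply tendsto_atTop_mono' atTop (f₁ := id)
    · filter_upwards [eventually_ge_atTop a] with N hN
      exact (hνmem N hN).1
    · exact tendsto_id
  -- Step D: ratio at ν N tends to 1
  have hD : Tendsto (fun N : ℕ => t (ν N) / (C * (ν N : ℝ) ^ (-p))) atTop (nhds 1) :=
    hasymp.comp hνtop
  -- Step E: `(ν N / N)^{-p} → 1`
  have hE : Tendsto (fun N : ℕ => ((ν N : ℝ) / N) ^ (-p)) atTop (nhds 1) := by
    have := hstend.rpow_const (p := -p) (Or.inl one_ne_zero)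
    simpa using this
  -- assemble
  have hmain : Tendsto (fun N : ℕ => t (ν N) / (C * (N : ℝ) ^ (-p))) atTop (nhds 1) := by
    have hprod := hD.mul hE
    rw [one_mul] at hprod
    refine hprod.congr' ?_
    filter_upwards [eventually_ge_atTop (max a 1)] with N hN
    have haN : a ≤ N := le_trans (le_max_left a 1) hN
    have hN1 : 1 ≤ N := le_trans (le_max_right a 1) hN
    have hNpos : (0:ℝ) < N := by exact_mod_cast hN1
    have hνpos : (0:ℝ) < (ν N : ℝ) := by
      exact_mod_cast lt_of_lt_of_le hN1 (hνmem N haN).1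
    have hdiv : ((ν N : ℝ) / N) ^ (-p) = (ν N : ℝ) ^ (-p) / (N : ℝ) ^ (-p) :=
      Real.div_rpow hνpos.le hNpos.le (-p)
    have hνp : (0:ℝ) < (ν N : ℝ) ^ (-p) := Real.rpow_pos_of_pos hνpos (-p)
    have hNp : (0:ℝ) < (N : ℝ) ^ (-p) := Real.rpow_pos_of_pos hNpos (-p)
    rw [hdiv, div_mul_div_comm,
      show C * (ν N : ℝ) ^ (-p) * ((N : ℝ) ^ (-p)) = (ν N : ℝ) ^ (-p) * (C * (N : ℝ) ^ (-p)) by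
        ring,
      show t (ν N) * (ν N : ℝ) ^ (-p) = (ν N : ℝ) ^ (-p) * t (ν N) by ring,
      mul_div_mul_left _ _ hνp.ne']
  exact hmain
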